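/- Let I : ℝ → ℝ be continuous with finite limits I(±∞), let g : ℝ → ℝ be bounded measurable with finite limits g(±∞), and fix ν > 0 and ξ ∈ ℝ. Then along the path x = ξ√(νt), lim_{t→∞} [∫_ℝ g(y) e^{-(1/ν)(I(y)+(x-y)²/(2t))} dy] / [∫_ℝ e^{-(1/ν)(I(y)+(x-y)²/(2t))} dy] = (g(+∞) e^{-I(+∞)/ν} ∫_{-∞}^{ξ} e^{-y²/2} dy + g(-∞) e^{-I(-∞)/ν} ∫_{ξ}^{∞} e^{-y²/2} dy) / (e^{-I(+∞)/ν} ∫_{-∞}^{ξ} e^{-y²/2} dy + e^{-I(-∞)/ν} ∫_{ξ}^{∞} e^{-y²/2} dy). -/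

import Mathlib

open Real MeasureTheory Filter

private lemma sqrt_tendsto_atTop' : Tendsto Real.sqrt atTop atTop := by
  refine tendsto_atTop_atTop.mpr fun b => ⟨max (b^2) 0, fun a ha => ?_⟩
  calc b ≤ |b| := le_abs_self b
    _ = Real.sqrt (b^2) := (Real.sqrt_sq_eq_abs b).symm
    _ ≤ Real.sqrt a := Real.sqrt_le_sqrt (le_trans (le_max_left _ _) ha)

private lemma map_const_sub (c : ℝ) :
    Measure.map (fun z : ℝ => c - z) volume = volume := by
  have h : (fun z : ℝ => c - z) = (fun w : ℝ => c + w) ∘ (fun z : ℝ => -z) := by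
    funext z; simp [sub_eq_add_neg]
  rw [h, ← Measure.map_map (measurable_const_add c) measurable_neg,
    Measure.map_neg_eq_self (volume : Measure ℝ)]
  exact MeasureTheory.map_add_left_eq_self volume c

private lemma me_const_sub (c : ℝ) : MeasurableEmbedding (fun z : ℝ => c - z) :=
  (Homeomorph.subLeft c).isClosedEmbedding.measurableEmbedding

private lemma integral_Ioi_sub (f : ℝ → ℝ) (c : ℝ) :
    ∫ z in Set.Ioi (0:ℝ), f (c - z) = ∫ y in Set.Iic c, f y := by
  have h := (me_const_sub c).setIntegral_map (μ := volume) f (Set.Iic c)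
  rw [map_const_sub] at h
  have hpre : (fun z : ℝ => c - z) ⁻¹' Set.Iic c = Set.Ici 0 := by
    ext z; simp
  rw [h, hpre, MeasureTheory.integral_Ici_eq_integral_Ioi]

private lemma integral_Iio_sub (f : ℝ → ℝ) (c : ℝ) :
    ∫ z in Set.Iio (0:ℝ), f (c - z) = ∫ y in Set.Ici c, f y := by
  have h := (me_const_sub c).setIntegral_map (μ := volume) f (Set.Ioi c)
  rw [map_const_sub] at h
  have hpre : (fun z : ℝ => c - z) ⁻¹' Set.Ioi c = Set.Iio 0 := by
    ext z; simp
  rw [MeasureTheory.integral_Ici_eq_integral_Ioi, h, hpre]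

private lemma gauss_integrable' : Integrable (fun y : ℝ => Real.exp (-y^2 / 2)) := by
  have h : (fun y : ℝ => Real.exp (-y^2/2)) = fun y => Real.exp (-(1/2:ℝ) * y^2) := by
    funext y; congr 1; ring
  rw [h]; exact integrable_exp_neg_mul_sq (by norm_num)

private lemma gauss_integrable (ξ : ℝ) :
    Integrable (fun z : ℝ => Real.exp (-(ξ - z)^2 / 2)) := by
  have h : (fun z : ℝ => Real.exp (-(ξ - z)^2/2))
      = fun z => Real.exp (-(1/2:ℝ) * (ξ - z)^2) := by
    funext z; congr 1; ring
  rw [h]; exact (integrable_exp_neg_mul_sq (by norm_num)).comp_sub_left ξ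

private lemma gauss_pos_Iic (ξ : ℝ) : 0 < ∫ y in Set.Iic ξ, Real.exp (-y^2/2) := by
  rw [setIntegral_pos_iff_support_of_nonneg_ae
    (Filter.Eventually.of_forall fun y => (Real.exp_pos _).le)
    gauss_integrable'.integrableOn]
  have hs : Function.support (fun y : ℝ => Real.exp (-y^2/2)) = Set.univ := by
    ext y; simp [Function.mem_support, Real.exp_ne_zero]
  rw [hs, Set.univ_inter, Real.volume_Iic]
  simp

private lemma gauss_pos_Ici (ξ : ℝ) : 0 < ∫ y in Set.Ici ξ, Real.exp (-y^2/2) := by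
  rw [setIntegral_pos_iff_support_of_nonneg_ae
    (Filter.Eventually.of_forall fun y => (Real.exp_pos _).le)
    gauss_integrable'.integrableOn]
  have hs : Function.support (fun y : ℝ => Real.exp (-y^2/2)) = Set.univ := by
    ext y; simp [Function.mem_support, Real.exp_ne_zero]
  rw [hs, Set.univ_inter, Real.volume_Ici]
  simp

private lemma bdd_of_tendsto {I : ℝ → ℝ} (hI : Continuous I) {Ip Im : ℝ}
    (hIp : Tendsto I atTop (nhds Ip)) (hIm : Tendsto I atBot (nhds Im)) :
    ∃ B, ∀ y, |I y| ≤ B := by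
  have h1 : ∀ᶠ y in atTop, |I y - Ip| < 1 := by
    have := Metric.tendsto_nhds.mp hIp 1 one_pos
    simpa [Real.dist_eq] using this
  obtain ⟨a, ha⟩ := eventually_atTop.mp h1
  have h2 : ∀ᶠ y in atBot, |I y - Im| < 1 := by
    have := Metric.tendsto_nhds.mp hIm 1 one_pos
    simpa [Real.dist_eq] using this
  obtain ⟨b, hb⟩ := eventually_atBot.mp h2
  obtain ⟨C, hC⟩ := (isCompact_Icc (a := b) (b := a)).exists_bound_of_continuousOn
    hI.continuousOn
  refine ⟨max (max (|Ip|+1) (|Im|+1)) C, fun y => ?_⟩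
  rcases le_or_gt a y with hy | hy
  · have := ha y hy
    calc |I y| ≤ |I y - Ip| + |Ip| := by
          simpa using abs_add_le (I y - Ip) Ip
      _ ≤ |Ip| + 1 := by linarith
      _ ≤ _ := le_trans (le_max_left _ _) (le_max_left _ _)
  rcases le_or_gt y b with hy' | hy'
  · have := hb y hy'
    calc |I y| ≤ |I y - Im| + |Im| := by
          simpa using abs_add_le (I y - Im) Im
      _ ≤ |Im| + 1 := by linarith
      _ ≤ _ := le_trans (le_max_right _ _) (le_max_left _ _)
  · have := hC y ⟨hy'.le, hy.le⟩
    rw [Real.norm_eq_abs] at this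
    exact le_trans this (le_max_right _ _)

private lemma main_aux (ν ξ : ℝ) (hν : 0 < ν)
    (I : ℝ → ℝ) (hI : Continuous I) (Ip Im : ℝ)
    (hIp : Tendsto I atTop (nhds Ip)) (hIm : Tendsto I atBot (nhds Im))
    (g : ℝ → ℝ) (hgm : Measurable g) (M : ℝ) (hgb : ∀ y, |g y| ≤ M)
    (gp gm : ℝ) (hgp : Tendsto g atTop (nhds gp)) (hgm' : Tendsto g atBot (nhds gm)) :
    Tendsto (fun t : ℝ => ∫ z : ℝ, g (Real.sqrt (ν * t) * z) *
        (Real.exp (-(1/ν) * I (Real.sqrt (ν * t) * z)) * Real.exp (-(ξ - z)^2 / 2)))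
      atTop
      (nhds (gp * Real.exp (-Ip / ν) * (∫ y in Set.Iic ξ, Real.exp (-y^2 / 2)) +
             gm * Real.exp (-Im / ν) * (∫ y in Set.Ici ξ, Real.exp (-y^2 / 2)))) := by
  obtain ⟨B, hB⟩ := bdd_of_tendsto hI hIp hIm
  set L : ℝ → ℝ := fun z =>
    (if 0 < z then gp * Real.exp (-Ip/ν) else gm * Real.exp (-Im/ν)) *
      Real.exp (-(ξ - z)^2/2) with hLdef
  have key : Tendsto (fun t : ℝ => ∫ z : ℝ, g (Real.sqrt (ν * t) * z) *
        (Real.exp (-(1/ν) * I (Real.sqrt (ν * t) * z)) * Real.exp (-(ξ - z)^2 / 2)))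
      atTop (nhds (∫ z, L z)) := by
    apply tendsto_integral_filter_of_dominated_convergence
      (bound := fun z => (M * Real.exp (B/ν)) * Real.exp (-(ξ - z)^2/2))
    · filter_upwards with t
      apply Measurable.aestronglyMeasurable
      have hm1 : Measurable fun z : ℝ => Real.sqrt (ν*t) * z :=
        measurable_id.const_mul _
      have hc : Continuous fun z : ℝ => Real.exp (-(ξ - z)^2/2) := by continuity
      exact (hgm.comp hm1).mul
        (((Real.measurable_exp.comp (((hI.measurable.comp hm1)).const_mul _))).mul
          hc.measurable)
    · filter_upwards with t
      refine Filter.Eventually.of_forall fun z => ?_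
      set c := Real.sqrt (ν*t)
      have h1 : |g (c*z)| ≤ M := hgb _
      have h2 : Real.exp (-(1/ν) * I (c*z)) ≤ Real.exp (B/ν) := by
        apply Real.exp_le_exp.mpr
        have he : -(1/ν) * I (c*z) = (- I (c*z)) / ν := by ring
        rw [he]
        gcongr
        linarith [(abs_le.mp (hB (c*z))).1]
      have hM0 : 0 ≤ M := le_trans (abs_nonneg _) (hgb 0)
      calc ‖g (c*z) * (Real.exp (-(1/ν) * I (c*z)) * Real.exp (-(ξ - z)^2/2))‖
          = |g (c*z)| * (Real.exp (-(1/ν) * I (c*z)) * Real.exp (-(ξ - z)^2/2)) := by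
            rw [Real.norm_eq_abs, abs_mul, abs_mul, abs_of_pos (Real.exp_pos _),
              abs_of_pos (Real.exp_pos _)]
        _ ≤ M * (Real.exp (B/ν) * Real.exp (-(ξ - z)^2/2)) := by
            apply mul_le_mul h1 (mul_le_mul_of_nonneg_right h2 (Real.exp_pos _).le)
              (by positivity) hM0
        _ = (M * Real.exp (B/ν)) * Real.exp (-(ξ - z)^2/2) := by ring
    · exact (gauss_integrable ξ).const_mul _
    · have hs : Tendsto (fun t : ℝ => Real.sqrt (ν * t)) atTop atTop :=
        sqrt_tendsto_atTop'.comp (Tendsto.const_mul_atTop hν tendsto_id)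
      have h0 : ∀ᵐ z : ℝ, z ≠ 0 := by
        refine ae_iff.mpr ?_
        have : {a : ℝ | ¬ a ≠ 0} = {(0:ℝ)} := by ext z; simp
        rw [this]; exact measure_singleton 0
      filter_upwards [h0] with z hz
      rcases hz.lt_or_gt with hneg | hpos
      · have hz' : Tendsto (fun t : ℝ => Real.sqrt (ν*t) * z) atTop atBot :=
          Tendsto.atTop_mul_const_of_neg hneg hs
        have hg' : Tendsto (fun t : ℝ => g (Real.sqrt (ν*t) * z)) atTop (nhds gm) :=
          hgm'.comp hz'
        have hexp : Tendsto (fun t : ℝ => Real.exp (-(1/ν) * I (Real.sqrt (ν*t) * z)))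
            atTop (nhds (Real.exp (-(1/ν) * Im))) :=
          (Real.continuous_exp.tendsto _).comp ((hIm.comp hz').const_mul (-(1/ν)))
        have hLz : L z = gm * (Real.exp (-(1/ν) * Im) * Real.exp (-(ξ - z)^2/2)) := by
          rw [hLdef]
          simp only [not_lt.mpr hneg.le, if_false]
          rw [show -(1/ν) * Im = -Im/ν by ring]; ring
        rw [hLz]
        exact hg'.mul (hexp.mul_const _)
      · have hz' : Tendsto (fun t : ℝ => Real.sqrt (ν*t) * z) atTop atTop :=
          Tendsto.atTop_mul_const hpos hs
        have hg' : Tendsto (fun t : ℝ => g (Real.sqrt (ν*t) * z)) atTop (nhds gp) :=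
          hgp.comp hz'
        have hexp : Tendsto (fun t : ℝ => Real.exp (-(1/ν) * I (Real.sqrt (ν*t) * z)))
            atTop (nhds (Real.exp (-(1/ν) * Ip))) :=
          (Real.continuous_exp.tendsto _).comp ((hIp.comp hz').const_mul (-(1/ν)))
        have hLz : L z = gp * (Real.exp (-(1/ν) * Ip) * Real.exp (-(ξ - z)^2/2)) := by
          rw [hLdef]
          simp only [if_pos hpos]
          rw [show -(1/ν) * Ip = -Ip/ν by ring]; ring
        rw [hLz]
        exact hg'.mul (hexp.mul_const _)
  have hLint : Integrable L := by
    apply (gauss_integrable ξ).bdd_mul (c := max |gp * Real.exp (-Ip/ν)| |gm * Real.exp (-Im/ν)|)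
    · apply Measurable.aestronglyMeasurable
      exact Measurable.ite measurableSet_Ioi measurable_const measurable_const
    · refine Filter.Eventually.of_forall fun z => ?_
      rw [Real.norm_eq_abs]
      split_ifs
      · exact le_max_left _ _
      · exact le_max_right _ _
  have hLval : ∫ z, L z =
      gp * Real.exp (-Ip / ν) * (∫ y in Set.Iic ξ, Real.exp (-y^2 / 2)) +
      gm * Real.exp (-Im / ν) * (∫ y in Set.Ici ξ, Real.exp (-y^2 / 2)) := by
    rw [← intervalIntegral.integral_Iio_add_Ici (b := (0:ℝ)) hLint.integrableOn hLint.integrableOn]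
    have e1 : ∫ z in Set.Iio (0:ℝ), L z =
        gm * Real.exp (-Im/ν) * ∫ y in Set.Ici ξ, Real.exp (-y^2/2) := by
      rw [setIntegral_congr_fun measurableSet_Iio
        (g := fun z => gm * Real.exp (-Im/ν) * Real.exp (-(ξ - z)^2/2))
        (fun z hz => by simp [hLdef, not_lt.mpr (le_of_lt (Set.mem_Iio.mp hz))])]
      rw [MeasureTheory.integral_const_mul]
      congr 1
      exact integral_Iio_sub (fun y => Real.exp (-y^2/2)) ξ
    have e2 : ∫ z in Set.Ici (0:ℝ), L z =
        gp * Real.exp (-Ip/ν) * ∫ y in Set.Iic ξ, Real.exp (-y^2/2) := by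
      rw [MeasureTheory.integral_Ici_eq_integral_Ioi]
      rw [setIntegral_congr_fun measurableSet_Ioi
        (g := fun z => gp * Real.exp (-Ip/ν) * Real.exp (-(ξ - z)^2/2))
        (fun z hz => by simp [hLdef, Set.mem_Ioi.mp hz])]
      rw [MeasureTheory.integral_const_mul]
      congr 1
      exact integral_Ioi_sub (fun y => Real.exp (-y^2/2)) ξ
    rw [e1, e2]; ring
  rw [hLval] at key
  exact key

/-- Theorem 2.1: along the self-similar path `x = ξ√(νt)`, the Hopf--Cole
solution converges, as `t → ∞`, to the self-similar profile in `ξ`. -/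
theorem stmt3 (ν ξ : ℝ) (hν : 0 < ν)
    (I : ℝ → ℝ) (hI : Continuous I)
    (Ip Im : ℝ) (hIp : Tendsto I atTop (nhds Ip)) (hIm : Tendsto I atBot (nhds Im))
    (g : ℝ → ℝ) (hgm : Measurable g) (hgb : ∃ M, ∀ y, |g y| ≤ M)
    (gp gm : ℝ) (hgp : Tendsto g atTop (nhds gp)) (hgm' : Tendsto g atBot (nhds gm)) :
    Tendsto
      (fun t : ℝ =>
        (∫ y : ℝ, g y *
          Real.exp (-(1/ν) * (I y + (ξ * Real.sqrt (ν * t) - y)^2 / (2*t)))) /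
        (∫ y : ℝ,
          Real.exp (-(1/ν) * (I y + (ξ * Real.sqrt (ν * t) - y)^2 / (2*t)))))
      atTop
      (nhds
        ((gp * Real.exp (-Ip / ν) * (∫ y in Set.Iic ξ, Real.exp (-y^2 / 2)) +
          gm * Real.exp (-Im / ν) * (∫ y in Set.Ici ξ, Real.exp (-y^2 / 2))) /
         (Real.exp (-Ip / ν) * (∫ y in Set.Iic ξ, Real.exp (-y^2 / 2)) +
          Real.exp (-Im / ν) * (∫ y in Set.Ici ξ, Real.exp (-y^2 / 2))))) := by
  obtain ⟨M, hM⟩ := hgb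
  have hnum := main_aux ν ξ hν I hI Ip Im hIp hIm g hgm M hM gp gm hgp hgm'
  have hden' := main_aux ν ξ hν I hI Ip Im hIp hIm (fun _ => 1) measurable_const 1
    (fun y => by norm_num) 1 1 tendsto_const_nhds tendsto_const_nhds
  have hden : Tendsto (fun t : ℝ => ∫ z : ℝ, (1 : ℝ) *
        (Real.exp (-(1/ν) * I (Real.sqrt (ν * t) * z)) * Real.exp (-(ξ - z)^2 / 2)))
      atTop
      (nhds (Real.exp (-Ip / ν) * (∫ y in Set.Iic ξ, Real.exp (-y^2 / 2)) +
             Real.exp (-Im / ν) * (∫ y in Set.Ici ξ, Real.exp (-y^2 / 2)))) := by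
    simpa using hden'
  have hDne : (Real.exp (-Ip / ν) * (∫ y in Set.Iic ξ, Real.exp (-y^2 / 2)) +
      Real.exp (-Im / ν) * (∫ y in Set.Ici ξ, Real.exp (-y^2 / 2))) ≠ 0 := by
    have := add_pos (mul_pos (Real.exp_pos (-Ip/ν)) (gauss_pos_Iic ξ))
      (mul_pos (Real.exp_pos (-Im/ν)) (gauss_pos_Ici ξ))
    exact this.ne'
  have hdiv := hnum.div hden hDne
  refine Tendsto.congr' ?_ hdiv
  filter_upwards [eventually_gt_atTop (0:ℝ)] with t ht
  have hνt : 0 < ν * t := mul_pos hν ht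
  have hc : 0 < Real.sqrt (ν * t) := Real.sqrt_pos.mpr hνt
  have hc2 : Real.sqrt (ν * t) ^ 2 = ν * t := Real.sq_sqrt hνt.le
  have key1 : ∀ f : ℝ → ℝ, ∫ y, f y = Real.sqrt (ν * t) * ∫ z, f (Real.sqrt (ν * t) * z) := by
    intro f
    rw [MeasureTheory.Measure.integral_comp_mul_left f (Real.sqrt (ν * t)),
      abs_of_pos (inv_pos.mpr hc), smul_eq_mul]
    field_simp
  have hexp : ∀ z : ℝ, Real.exp (-(1/ν) * (I (Real.sqrt (ν * t) * z) +
      (ξ * Real.sqrt (ν * t) - Real.sqrt (ν * t) * z)^2 / (2*t)))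
      = Real.exp (-(1/ν) * I (Real.sqrt (ν * t) * z)) * Real.exp (-(ξ - z)^2 / 2) := by
    intro z
    rw [← Real.exp_add]
    congr 1
    have h2 : (ξ * Real.sqrt (ν * t) - Real.sqrt (ν * t) * z)^2 = (ν*t) * (ξ - z)^2 := by
      have h3 : (ξ * Real.sqrt (ν * t) - Real.sqrt (ν * t) * z)^2
          = Real.sqrt (ν * t)^2 * (ξ - z)^2 := by ring
      rw [h3, hc2]
    rw [h2]
    field_simp
    ring
  have hnumEq : (∫ y : ℝ, g y *
      Real.exp (-(1/ν) * (I y + (ξ * Real.sqrt (ν * t) - y)^2 / (2*t))))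
      = Real.sqrt (ν * t) * ∫ z : ℝ, g (Real.sqrt (ν * t) * z) *
        (Real.exp (-(1/ν) * I (Real.sqrt (ν * t) * z)) * Real.exp (-(ξ - z)^2 / 2)) := by
    rw [key1 (fun y => g y *
      Real.exp (-(1/ν) * (I y + (ξ * Real.sqrt (ν * t) - y)^2 / (2*t))))]
    congr 1
    refine integral_congr_ae (Filter.Eventually.of_forall fun z => ?_)
    dsimp only
    rw [hexp z]
  have hdenEq : (∫ y : ℝ,
      Real.exp (-(1/ν) * (I y + (ξ * Real.sqrt (ν * t) - y)^2 / (2*t))))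
      = Real.sqrt (ν * t) * ∫ z : ℝ, (1:ℝ) *
        (Real.exp (-(1/ν) * I (Real.sqrt (ν * t) * z)) * Real.exp (-(ξ - z)^2 / 2)) := by
    rw [key1 (fun y =>
      Real.exp (-(1/ν) * (I y + (ξ * Real.sqrt (ν * t) - y)^2 / (2*t))))]
    congr 1
    refine integral_congr_ae (Filter.Eventually.of_forall fun z => ?_)
    dsimp only
    rw [one_mul, hexp z]
  simp only [Pi.div_apply]
  rw [hnumEq, hdenEq, mul_div_mul_left _ _ hc.ne']
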